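/- arXiv:2402.18129 — 3 statements merged into one kernel-verified Lean document; each statement's English description precedes it below -/
import Mathlib

section
/- Define h : [0, ∞) → ℝ by h(t) = t² for 0 ≤ t ≤ 1 and h(t) = 2t − 1 for t ≥ 1. For every pair of jointly distributed random variables (Y, S) taking values in finite sets: χ²(P_{Y,S}, P_Y × P_S) ≥ h( 2 · E_{s∼P_S}[ TV(P_{Y|S=s}, P_Y) ] ), where χ²(P_{Y,S}, P_Y × P_S) is the chi-squared divergence between the joint distribution and the product of the marginals. -/
open Finset

noncomputable section

variable {𝒴 𝒮 : Type*} [Fintype 𝒴] [Fintype 𝒮]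

/-- Total variation distance between two finitely supported distributions on `𝒴`,
`TV(p, q) = (1/2) ∑ y, |p y - q y|`. -/
def TV (p q : 𝒴 → ℝ) : ℝ := (1 / 2) * ∑ y, |p y - q y|

/-- Marginal distribution of `Y` under the joint `P` of `(Y, S)`. -/
def margY (P : 𝒴 → 𝒮 → ℝ) (y : 𝒴) : ℝ := ∑ s, P y s

/-- Marginal distribution of `S`. -/
def margS (P : 𝒴 → 𝒮 → ℝ) (s : 𝒮) : ℝ := ∑ y, P y s

/-- Conditional distribution of `Y` given `S = s`. -/
def condYS (P : 𝒴 → 𝒮 → ℝ) (s : 𝒮) (y : 𝒴) : ℝ := P y s / margS P s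

/-- The function `h(t) = t²` for `t ≤ 1` and `h(t) = 2t - 1` for `t ≥ 1`. -/
def hfun (t : ℝ) : ℝ := if t ≤ 1 then t ^ 2 else 2 * t - 1

/-- χ²-divergence between the joint distribution `P` of `(Y, S)` and the product of its
marginals, summed over pairs with positive product of marginals. -/
def chiSq (P : 𝒴 → 𝒮 → ℝ) : ℝ :=
  ∑ y, ∑ s,
    if 0 < margY P y * margS P s then
      (P y s - margY P y * margS P s) ^ 2 / (margY P y * margS P s)
    else 0

lemma numkey {a b d : ℝ} (ha : 0 < a) (hd : 0 < d) (hdb : d ≤ b) (hab : a + b ≤ 1) :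
    hfun (2 * d) ≤ d ^ 2 / a + d ^ 2 / b := by
  have hb : 0 < b := lt_of_lt_of_le hd hdb
  rw [div_add_div _ _ ha.ne' hb.ne']
  rw [hfun]
  split_ifs with h
  · rw [le_div_iff₀ (mul_pos ha hb)]
    nlinarith [mul_nonneg (sq_nonneg d) (sq_nonneg (a - b)),
      mul_nonneg (mul_nonneg (sq_nonneg d) (add_pos ha hb).le) (by linarith : (0:ℝ) ≤ 1 - (a+b))]
  · rw [le_div_iff₀ (mul_pos ha hb)]
    push_neg at h
    have h2 : 0 ≤ (4*d - 1)*b - d^2 := by nlinarith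
    nlinarith [mul_nonneg (by linarith : (0:ℝ) ≤ 1 - (a+b)) h2,
      mul_nonneg hd.le (sq_nonneg (2*d - 1)),
      mul_nonneg (mul_nonneg (by linarith : (0:ℝ) ≤ 4*d - 1) (sub_nonneg.2 hdb)) (by nlinarith : (0:ℝ) ≤ b + d - 1)]

lemma pinsker_key {Ω : Type*} [Fintype Ω] (p q : Ω → ℝ)
    (hp : ∀ ω, 0 ≤ p ω) (hq : ∀ ω, 0 ≤ q ω)
    (hp1 : ∑ ω, p ω = 1) (hq1 : ∑ ω, q ω = 1)
    (hqp : ∀ ω, q ω = 0 → p ω = 0) :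
    hfun (∑ ω, |p ω - q ω|) ≤ ∑ ω, if 0 < q ω then (p ω - q ω) ^ 2 / q ω else 0 := by
  classical
  set A : Finset Ω := univ.filter (fun ω => q ω < p ω) with hA
  set B : Finset Ω := univ.filter (fun ω => 0 < q ω ∧ p ω ≤ q ω) with hB
  have hqA : ∀ ω ∈ A, 0 < q ω := by
    intro ω hω
    rw [hA, mem_filter] at hω
    rcases (hq ω).lt_or_eq with h | h
    · exact h
    · exfalso
      have h0 := hqp ω h.symm
      have := hω.2
      rw [h0, ← h] at this
      exact lt_irrefl 0 this
  set d : ℝ := ∑ ω ∈ A, (p ω - q ω) with hd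
  set a : ℝ := ∑ ω ∈ A, q ω with ha
  set b : ℝ := ∑ ω ∈ B, q ω with hb
  have hAc : ∑ ω ∈ Aᶜ, (q ω - p ω) = d := by
    have h0 : d + ∑ ω ∈ Aᶜ, (p ω - q ω) = 0 := by
      rw [hd, Finset.sum_add_sum_compl, Finset.sum_sub_distrib, hp1, hq1]; ring
    have h1 : ∑ ω ∈ Aᶜ, (q ω - p ω) + ∑ ω ∈ Aᶜ, (p ω - q ω) = 0 := by
      rw [← Finset.sum_add_distrib]; simp
    linarith
  have hBsub : B ⊆ Aᶜ := by
    intro ω hω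
    rw [hB, mem_filter] at hω
    simp only [Finset.mem_compl, hA, mem_filter, mem_univ, true_and]
    exact not_lt.2 hω.2.2
  have hBd : ∑ ω ∈ B, (q ω - p ω) = d := by
    rw [← hAc]
    apply Finset.sum_subset hBsub
    intro ω hω hωB
    simp only [Finset.mem_compl, hA, mem_filter, mem_univ, true_and, not_lt] at hω
    rw [hB, mem_filter] at hωB
    push_neg at hωB
    have hq0 : q ω = 0 := by
      rcases (hq ω).lt_or_eq with h | h
      · exact absurd hω (by simpa using hωB (mem_univ ω) h)
      · exact h.symm
    rw [hq0, hqp ω hq0]; ring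
  have habs : ∑ ω, |p ω - q ω| = 2 * d := by
    rw [← Finset.sum_add_sum_compl A]
    have e1 : ∑ ω ∈ A, |p ω - q ω| = d := by
      rw [hd]
      apply Finset.sum_congr rfl
      intro ω hω
      rw [hA, mem_filter] at hω
      exact abs_of_pos (by linarith [hω.2])
    have e2 : ∑ ω ∈ Aᶜ, |p ω - q ω| = d := by
      rw [← hAc]
      apply Finset.sum_congr rfl
      intro ω hω
      simp only [Finset.mem_compl, hA, mem_filter, mem_univ, true_and, not_lt] at hω
      rw [abs_of_nonpos (by linarith)]; ring
    rw [e1, e2]; ring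
  have hd0 : 0 ≤ d := by
    rw [hd]; apply Finset.sum_nonneg; intro ω hω
    rw [hA, mem_filter] at hω; linarith [hω.2]
  have hchi0 : 0 ≤ ∑ ω, if 0 < q ω then (p ω - q ω) ^ 2 / q ω else 0 := by
    apply Finset.sum_nonneg; intro ω _
    split_ifs with h
    · positivity
    · exact le_rfl
  rcases hd0.lt_or_eq with hdpos | hdz
  swap
  · rw [habs, ← hdz]
    norm_num [hfun]
    exact hchi0
  have hAne : A.Nonempty := by
    by_contra hne
    rw [Finset.not_nonempty_iff_eq_empty] at hne
    rw [hd, hne, Finset.sum_empty] at hdpos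
    exact lt_irrefl _ hdpos
  have hapos : 0 < a := by
    rw [ha]; exact Finset.sum_pos hqA hAne
  have hdb : d ≤ b := by
    rw [← hBd, hb]
    apply Finset.sum_le_sum
    intro ω hω
    linarith [hp ω]
  have hdisj : Disjoint A B := by
    rw [Finset.disjoint_left]
    intro ω hω hω'
    rw [hA, mem_filter] at hω
    rw [hB, mem_filter] at hω'
    linarith [hω.2, hω'.2.2]
  have hab1 : a + b ≤ 1 := by
    calc a + b = ∑ ω ∈ A ∪ B, q ω := (Finset.sum_union hdisj).symm
    _ ≤ ∑ ω, q ω := Finset.sum_le_sum_of_subset_of_nonneg (Finset.subset_univ _) (fun ω _ _ => hq ω)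
    _ = 1 := hq1
  have hqB : ∀ ω ∈ B, 0 < q ω := by
    intro ω hω; rw [hB, mem_filter] at hω; exact hω.2.1
  have cs1 : d ^ 2 / a ≤ ∑ ω ∈ A, (p ω - q ω) ^ 2 / q ω :=
    sq_sum_div_le_sum_sq_div A (fun ω => p ω - q ω) hqA
  have cs2 : d ^ 2 / b ≤ ∑ ω ∈ B, (p ω - q ω) ^ 2 / q ω := by
    have h := sq_sum_div_le_sum_sq_div B (fun ω => q ω - p ω) hqB
    rw [hBd] at h
    refine h.trans_eq (Finset.sum_congr rfl (fun ω _ => ?_))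
    rw [show (q ω - p ω) ^ 2 = (p ω - q ω) ^ 2 by ring]
  have eA : ∑ ω ∈ A, (p ω - q ω) ^ 2 / q ω
      = ∑ ω ∈ A, (if 0 < q ω then (p ω - q ω) ^ 2 / q ω else 0) :=
    Finset.sum_congr rfl (fun ω hω => (if_pos (hqA ω hω)).symm)
  have eB : ∑ ω ∈ B, (p ω - q ω) ^ 2 / q ω
      = ∑ ω ∈ B, (if 0 < q ω then (p ω - q ω) ^ 2 / q ω else 0) :=
    Finset.sum_congr rfl (fun ω hω => (if_pos (hqB ω hω)).symm)
  rw [habs]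
  refine (numkey hapos hdpos hdb hab1).trans ?_
  calc d ^ 2 / a + d ^ 2 / b
      ≤ ∑ ω ∈ A, (p ω - q ω) ^ 2 / q ω + ∑ ω ∈ B, (p ω - q ω) ^ 2 / q ω := add_le_add cs1 cs2
    _ = ∑ ω ∈ A ∪ B, (if 0 < q ω then (p ω - q ω) ^ 2 / q ω else 0) := by
        rw [eA, eB, Finset.sum_union hdisj]
    _ ≤ ∑ ω, (if 0 < q ω then (p ω - q ω) ^ 2 / q ω else 0) := by
        apply Finset.sum_le_sum_of_subset_of_nonneg (Finset.subset_univ _)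
        intro ω _ _
        split_ifs with h
        · positivity
        · exact le_rfl


/-- **Lemma 2 (Pinsker's inequality for the χ²-divergence-based f-mutual-information).**
For every pair of jointly distributed random variables `(Y, S)` on finite sets,
`χ²(P_{Y,S}, P_Y × P_S) ≥ h(2 E_{s∼P_S}[TV(P_{Y|S=s}, P_Y)])`. -/
theorem chiSq_ge_hfun_expected_tv
    (P : 𝒴 → 𝒮 → ℝ)
    (hP0 : ∀ y s, 0 ≤ P y s)
    (hP1 : ∑ y, ∑ s, P y s = 1)
    (hS : ∀ s, 0 < margS P s) :
    chiSq P ≥ hfun (2 * ∑ s, margS P s * TV (condYS P s) (margY P)) := by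
  classical
  have hY0 : ∀ y, 0 ≤ margY P y := fun y => Finset.sum_nonneg fun s _ => hP0 y s
  have hSsum : ∑ s, margS P s = 1 := by
    simp only [margS]; rw [Finset.sum_comm]; exact hP1
  have hYsum : ∑ y, margY P y = 1 := by simp only [margY]; exact hP1
  set p : 𝒴 × 𝒮 → ℝ := fun ω => P ω.1 ω.2 with hpdef
  set q : 𝒴 × 𝒮 → ℝ := fun ω => margY P ω.1 * margS P ω.2 with hqdef
  have hqp : ∀ ω, q ω = 0 → p ω = 0 := by
    intro ω h
    have hY : margY P ω.1 = 0 := by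
      rcases mul_eq_zero.1 h with h' | h'
      · exact h'
      · exact absurd h' (hS ω.2).ne'
    have := (Finset.sum_eq_zero_iff_of_nonneg (fun s _ => hP0 ω.1 s)).1 hY
    exact this ω.2 (mem_univ _)
  have key := pinsker_key p q (fun ω => hP0 ω.1 ω.2)
    (fun ω => mul_nonneg (hY0 ω.1) (hS ω.2).le)
    (by rw [Fintype.sum_prod_type]; exact hP1)
    (by
      rw [Fintype.sum_prod_type]
      have hq' : ∀ y, ∑ s, q (y, s) = margY P y := by
        intro y
        show ∑ s, margY P y * margS P s = margY P y
        rw [← Finset.mul_sum, hSsum, mul_one]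
      rw [Finset.sum_congr rfl (fun y _ => hq' y)]
      exact hYsum)
    hqp
  have hTVs : ∀ s, margS P s * TV (condYS P s) (margY P)
      = (1/2) * ∑ y, |P y s - margY P y * margS P s| := by
    intro s
    rw [TV, mul_left_comm]
    congr 1
    rw [Finset.mul_sum]
    apply Finset.sum_congr rfl
    intro y _
    have e : margS P s * (condYS P s y - margY P y) = P y s - margY P y * margS P s := by
      rw [condYS, mul_sub, mul_div_cancel₀ _ (hS s).ne']; ring
    rw [← e, abs_mul, abs_of_pos (hS s)]
  have hTV : 2 * ∑ s, margS P s * TV (condYS P s) (margY P) = ∑ ω : 𝒴 × 𝒮, |p ω - q ω| := by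
    rw [Finset.sum_congr rfl (fun s _ => hTVs s), ← Finset.mul_sum, ← mul_assoc]
    norm_num
    rw [Fintype.sum_prod_type, Finset.sum_comm]
  have hchi : chiSq P = ∑ ω : 𝒴 × 𝒮, if 0 < q ω then (p ω - q ω) ^ 2 / q ω else 0 := by
    rw [chiSq, Fintype.sum_prod_type]
  rw [hchi, ge_iff_le, hTV]
  exact key
end
end

section
/- Define h : [0, ∞) → ℝ by h(t) = t² for 0 ≤ t ≤ 1 and h(t) = 2t − 1 for t ≥ 1, and let r = min{|𝒮|, |𝒴|} − 1. For every pair of jointly distributed random variables (Y, S) taking values in finite sets 𝒴, 𝒮: r · ρ_m(Y, S) ≥ h( 2 · E_{s∼P_S}[ TV(P_{Y|S=s}, P_Y) ] ), where ρ_m(Y, S) is the Hirschfeld–Gebelein–Rényi maximal correlation of Y and S. -/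
open Finset

noncomputable section

variable {𝒴 𝒮 : Type*} [Fintype 𝒴] [Fintype 𝒮]

/-- Hirschfeld–Gebelein–Rényi maximal correlation of a joint distribution `P` of `(Y, S)`:
the supremum of `E[f(Y) g(S)]` over `f, g` with zero mean and unit second moment. -/
def maxCorr (P : 𝒴 → 𝒮 → ℝ) : ℝ :=
  sSup { c : ℝ | ∃ f : 𝒴 → ℝ, ∃ g : 𝒮 → ℝ,
    (∑ y, margY P y * f y = 0) ∧ (∑ s, margS P s * g s = 0) ∧
    (∑ y, margY P y * f y ^ 2 = 1) ∧ (∑ s, margS P s * g s ^ 2 = 1) ∧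
    c = ∑ y, ∑ s, P y s * f y * g s }

namespace MaxCorrAux

/-- The standardized deviation matrix `B(y,s) = (P(y,s) - P_Y(y)P_S(s)) / √(P_Y(y) P_S(s))`. -/
def Bmat (P : 𝒴 → 𝒮 → ℝ) : Matrix 𝒴 𝒮 ℝ := fun y s =>
  (P y s - margY P y * margS P s) / (Real.sqrt (margY P y) * Real.sqrt (margS P s))

/-- The set appearing in the definition of `maxCorr`. -/
def corrSet (P : 𝒴 → 𝒮 → ℝ) : Set ℝ :=
  { c : ℝ | ∃ f : 𝒴 → ℝ, ∃ g : 𝒮 → ℝ,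
    (∑ y, margY P y * f y = 0) ∧ (∑ s, margS P s * g s = 0) ∧
    (∑ y, margY P y * f y ^ 2 = 1) ∧ (∑ s, margS P s * g s ^ 2 = 1) ∧
    c = ∑ y, ∑ s, P y s * f y * g s }

lemma maxCorr_eq (P : 𝒴 → 𝒮 → ℝ) : maxCorr P = sSup (corrSet P) := rfl

/-- A pure sum-exchange identity. -/
lemma sum_exchange (A : 𝒴 → 𝒮 → ℝ) (a b : 𝒴 → ℝ) :
    ∑ y, b y * (∑ y', (∑ s, A y s * A y' s) * a y')
      = ∑ s, (∑ y, b y * A y s) * (∑ y, a y * A y s) := by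
  calc ∑ y, b y * (∑ y', (∑ s, A y s * A y' s) * a y')
      = ∑ y, ∑ y', ∑ s, (b y * A y s) * (a y' * A y' s) := by
        refine Finset.sum_congr rfl fun y _ => ?_
        rw [Finset.mul_sum]
        refine Finset.sum_congr rfl fun y' _ => ?_
        rw [Finset.sum_mul, Finset.mul_sum]
        exact Finset.sum_congr rfl fun s _ => by ring
    _ = ∑ y, ∑ s, ∑ y', (b y * A y s) * (a y' * A y' s) :=
        Finset.sum_congr rfl fun y _ => Finset.sum_comm
    _ = ∑ s, ∑ y, ∑ y', (b y * A y s) * (a y' * A y' s) := Finset.sum_comm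
    _ = ∑ s, (∑ y, b y * A y s) * (∑ y, a y * A y s) := by
        refine Finset.sum_congr rfl fun s _ => ?_
        rw [Finset.sum_mul_sum]

section Facts

variable (P : 𝒴 → 𝒮 → ℝ)

lemma margY_nonneg (hP0 : ∀ y s, 0 ≤ P y s) (y : 𝒴) : 0 ≤ margY P y :=
  Finset.sum_nonneg fun s _ => hP0 y s

lemma sum_margY (hP1 : ∑ y, ∑ s, P y s = 1) : ∑ y, margY P y = 1 := by
  simpa [margY] using hP1

lemma sum_margS (hP1 : ∑ y, ∑ s, P y s = 1) : ∑ s, margS P s = 1 := by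
  rw [← hP1, Finset.sum_comm]
  rfl

lemma P_le_margY (hP0 : ∀ y s, 0 ≤ P y s) (y : 𝒴) (s : 𝒮) : P y s ≤ margY P y :=
  Finset.single_le_sum (fun s' _ => hP0 y s') (Finset.mem_univ s)

lemma P_eq_zero (hP0 : ∀ y s, 0 ≤ P y s) {y : 𝒴} (hy : margY P y = 0) (s : 𝒮) : P y s = 0 :=
  le_antisymm (hy ▸ P_le_margY P hP0 y s) (hP0 y s)

lemma Bmat_zero (hP0 : ∀ y s, 0 ≤ P y s) {y : 𝒴} (hy : margY P y = 0) (s : 𝒮) :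
    Bmat P y s = 0 := by
  simp [Bmat, P_eq_zero P hP0 hy s, hy]

/-- `√(q y) √(p s) B y s = P y s - q y p s`. -/
lemma sqrt_mul_Bmat (hP0 : ∀ y s, 0 ≤ P y s) (hS : ∀ s, 0 < margS P s) (y : 𝒴) (s : 𝒮) :
    Real.sqrt (margY P y) * Real.sqrt (margS P s) * Bmat P y s
      = P y s - margY P y * margS P s := by
  rcases eq_or_lt_of_le (margY_nonneg P hP0 y) with hq | hq
  · simp [Bmat_zero P hP0 hq.symm s, P_eq_zero P hP0 hq.symm s, ← hq]
  · have h1 : Real.sqrt (margY P y) ≠ 0 := Real.sqrt_ne_zero'.mpr hq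
    have h2 : Real.sqrt (margS P s) ≠ 0 := Real.sqrt_ne_zero'.mpr (hS s)
    rw [Bmat, mul_div_cancel₀]
    exact mul_ne_zero h1 h2

/-- `√(q y) B y s = (P y s - q y p s)/√(p s)`. -/
lemma sqrtq_mul_Bmat (hP0 : ∀ y s, 0 ≤ P y s) (hS : ∀ s, 0 < margS P s) (y : 𝒴) (s : 𝒮) :
    Real.sqrt (margY P y) * Bmat P y s
      = (P y s - margY P y * margS P s) / Real.sqrt (margS P s) := by
  have h2 : Real.sqrt (margS P s) ≠ 0 := Real.sqrt_ne_zero'.mpr (hS s)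
  rw [eq_div_iff h2, ← sqrt_mul_Bmat P hP0 hS y s]
  ring

/-- `√(p s) B y s = (P y s - q y p s)/√(q y)`. -/
lemma sqrtp_mul_Bmat (hP0 : ∀ y s, 0 ≤ P y s) (hS : ∀ s, 0 < margS P s) (y : 𝒴) (s : 𝒮) :
    Real.sqrt (margS P s) * Bmat P y s
      = (P y s - margY P y * margS P s) / Real.sqrt (margY P y) := by
  rcases eq_or_lt_of_le (margY_nonneg P hP0 y) with hq | hq
  · simp [Bmat_zero P hP0 hq.symm s, P_eq_zero P hP0 hq.symm s, ← hq]
  · have h1 : Real.sqrt (margY P y) ≠ 0 := by positivity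
    rw [eq_div_iff h1, ← sqrt_mul_Bmat P hP0 hS y s]
    ring

lemma sum_delta_y (hP1 : ∑ y, ∑ s, P y s = 1) (s : 𝒮) :
    ∑ y, (P y s - margY P y * margS P s) = 0 := by
  rw [Finset.sum_sub_distrib, ← Finset.sum_mul, sum_margY P hP1]
  simp [margS]

lemma sum_delta_s (hP1 : ∑ y, ∑ s, P y s = 1) (y : 𝒴) :
    ∑ s, (P y s - margY P y * margS P s) = 0 := by
  rw [Finset.sum_sub_distrib, ← Finset.mul_sum, sum_margS P hP1]
  simp [margY]

lemma col_orth (hP0 : ∀ y s, 0 ≤ P y s) (hP1 : ∑ y, ∑ s, P y s = 1)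
    (hS : ∀ s, 0 < margS P s) (s : 𝒮) :
    ∑ y, Real.sqrt (margY P y) * Bmat P y s = 0 := by
  have : ∑ y, Real.sqrt (margY P y) * Bmat P y s
      = (∑ y, (P y s - margY P y * margS P s)) / Real.sqrt (margS P s) := by
    rw [Finset.sum_div]
    exact Finset.sum_congr rfl fun y _ => sqrtq_mul_Bmat P hP0 hS y s
  rw [this, sum_delta_y P hP1 s, zero_div]

lemma row_orth (hP0 : ∀ y s, 0 ≤ P y s) (hP1 : ∑ y, ∑ s, P y s = 1)
    (hS : ∀ s, 0 < margS P s) (y : 𝒴) :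
    ∑ s, Real.sqrt (margS P s) * Bmat P y s = 0 := by
  have : ∑ s, Real.sqrt (margS P s) * Bmat P y s
      = (∑ s, (P y s - margY P y * margS P s)) / Real.sqrt (margY P y) := by
    rw [Finset.sum_div]
    exact Finset.sum_congr rfl fun s _ => sqrtp_mul_Bmat P hP0 hS y s
  rw [this, sum_delta_s P hP1 y, zero_div]

/-- Every element of the correlation set is at most 1. -/
lemma corrSet_le_one (hP0 : ∀ y s, 0 ≤ P y s) (hP1 : ∑ y, ∑ s, P y s = 1)
    {c : ℝ} (hc : c ∈ corrSet P) : c ≤ 1 := by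
  obtain ⟨f, g, h1, h2, h3, h4, h5⟩ := hc
  have key : c ^ 2 ≤ 1 := by
    have hc2 : c = ∑ x ∈ Finset.univ ×ˢ Finset.univ,
        (Real.sqrt (P x.1 x.2) * f x.1) * (Real.sqrt (P x.1 x.2) * g x.2) := by
      rw [h5, Finset.sum_product]
      refine Finset.sum_congr rfl fun y _ => Finset.sum_congr rfl fun s _ => ?_
      have h : Real.sqrt (P y s) * Real.sqrt (P y s) = P y s := Real.mul_self_sqrt (hP0 y s)
      dsimp only
      have h2 : Real.sqrt (P y s) * f y * (Real.sqrt (P y s) * g s)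
          = (Real.sqrt (P y s) * Real.sqrt (P y s)) * (f y * g s) := by ring
      rw [h2, h]; ring
    have hcs := Finset.sum_mul_sq_le_sq_mul_sq (Finset.univ ×ˢ Finset.univ)
      (fun x : 𝒴 × 𝒮 => Real.sqrt (P x.1 x.2) * f x.1)
      (fun x : 𝒴 × 𝒮 => Real.sqrt (P x.1 x.2) * g x.2)
    have e1 : ∑ x ∈ Finset.univ ×ˢ Finset.univ,
        (Real.sqrt (P x.1 x.2) * f x.1) ^ 2 = 1 := by
      rw [Finset.sum_product]
      calc ∑ y, ∑ s, (Real.sqrt (P y s) * f y) ^ 2 = ∑ y, margY P y * f y ^ 2 := by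
            refine Finset.sum_congr rfl fun y _ => ?_
            rw [margY, Finset.sum_mul]
            refine Finset.sum_congr rfl fun s _ => ?_
            rw [mul_pow, Real.sq_sqrt (hP0 y s)]
        _ = 1 := h3
    have e2 : ∑ x ∈ Finset.univ ×ˢ Finset.univ,
        (Real.sqrt (P x.1 x.2) * g x.2) ^ 2 = 1 := by
      rw [Finset.sum_product, Finset.sum_comm]
      calc ∑ s, ∑ y, (Real.sqrt (P y s) * g s) ^ 2 = ∑ s, margS P s * g s ^ 2 := by
            refine Finset.sum_congr rfl fun s _ => ?_
            rw [margS, Finset.sum_mul]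
            refine Finset.sum_congr rfl fun y _ => ?_
            rw [mul_pow, Real.sq_sqrt (hP0 y s)]
        _ = 1 := h4
    rw [← hc2, e1, e2, one_mul] at hcs
    exact hcs
  nlinarith [key]

lemma corrSet_bddAbove (hP0 : ∀ y s, 0 ≤ P y s) (hP1 : ∑ y, ∑ s, P y s = 1) :
    BddAbove (corrSet P) :=
  ⟨1, fun _ hc => corrSet_le_one P hP0 hP1 hc⟩

lemma maxCorr_nonneg (hP0 : ∀ y s, 0 ≤ P y s) (hP1 : ∑ y, ∑ s, P y s = 1) :
    0 ≤ maxCorr P := by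
  rw [maxCorr_eq]
  by_cases hne : (corrSet P).Nonempty
  · obtain ⟨c, hc⟩ := hne
    obtain ⟨f, g, h1, h2, h3, h4, h5⟩ := hc
    have hneg : -c ∈ corrSet P := by
      refine ⟨f, -g, h1, ?_, h3, ?_, ?_⟩
      · simpa [mul_neg, Finset.sum_neg_distrib] using h2
      · simpa using h4
      · rw [h5]
        simp [mul_neg, Finset.sum_neg_distrib]
    have hb := corrSet_bddAbove P hP0 hP1
    have l1 := le_csSup hb (show c ∈ corrSet P from ⟨f, g, h1, h2, h3, h4, h5⟩)
    have l2 := le_csSup hb hneg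
    linarith
  · rw [Set.not_nonempty_iff_eq_empty] at hne
    rw [hne, Real.sSup_empty]

end Facts


section Algebra

lemma aux1 {q x : ℝ} (hq : 0 ≤ q) : q * (x / Real.sqrt q) = Real.sqrt q * x := by
  rcases eq_or_lt_of_le hq with h | h
  · simp [← h]
  · have h1 : Real.sqrt q ≠ 0 := Real.sqrt_ne_zero'.mpr h
    field_simp
    linear_combination (-x) * Real.mul_self_sqrt hq

lemma aux2 {q x : ℝ} (hq : 0 ≤ q) (hz : q = 0 → x = 0) :
    q * (x / Real.sqrt q) ^ 2 = x * x := by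
  rcases eq_or_lt_of_le hq with h | h
  · rw [← h, hz h.symm]; simp
  · have h1 : q ≠ 0 := h.ne'
    rw [div_pow, Real.sq_sqrt hq]
    field_simp

lemma aux3 {p c x : ℝ} (hp : 0 < p) (hc : c ≠ 0) :
    p * (x / (Real.sqrt p * c)) = Real.sqrt p * x / c := by
  have h1 : Real.sqrt p ≠ 0 := Real.sqrt_ne_zero'.mpr hp
  field_simp
  linear_combination (-x) * Real.mul_self_sqrt hp.le

lemma aux4 {p c x : ℝ} (hp : 0 < p) (hc : c ≠ 0) :
    p * (x / (Real.sqrt p * c)) ^ 2 = x * x / (c * c) := by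
  have h1 : Real.sqrt p ≠ 0 := Real.sqrt_ne_zero'.mpr hp
  rw [div_pow, mul_pow, Real.sq_sqrt hp.le]
  field_simp

lemma aux5 {a b c BB uu vv PP : ℝ} (ha : a ≠ 0) (hb : b ≠ 0) (hc : c ≠ 0)
    (hP : PP = a * b * BB + (a * a) * (b * b)) :
    PP * (uu / a) * (vv / (b * c)) = BB * uu * (vv / c) + (a * uu) * (b * (vv / c)) := by
  subst hP
  field_simp

end Algebra

section Eigen

open Matrix

variable (P : 𝒴 → 𝒮 → ℝ)

lemma mulVec_apply_eq [DecidableEq 𝒴] (B : Matrix 𝒴 𝒮 ℝ) (a : 𝒴 → ℝ) (y : 𝒴) :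
    ((B * Bᵀ) *ᵥ a) y = ∑ y', (∑ s, B y s * B y' s) * a y' := by
  simp [Matrix.mulVec, Matrix.mul_apply, Matrix.transpose_apply, dotProduct]

lemma eig_le_maxCorr [DecidableEq 𝒴]
    (hP0 : ∀ y s, 0 ≤ P y s) (hP1 : ∑ y, ∑ s, P y s = 1) (hS : ∀ s, 0 < margS P s)
    (hM : (Bmat P * (Bmat P)ᵀ).IsHermitian) (i : 𝒴)
    (hne : hM.eigenvalues i ≠ 0) : hM.eigenvalues i ≤ maxCorr P := by
  set B := Bmat P with hB_def
  set ev := hM.eigenvalues i with hev_def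
  set u : 𝒴 → ℝ := ⇑(hM.eigenvectorBasis i) with hu_def
  have hu : (B * Bᵀ) *ᵥ u = ev • u := hM.mulVec_eigenvectorBasis i
  have hnorm : ∑ y, u y * u y = 1 := by
    have h := hM.eigenvectorBasis.orthonormal.1 i
    have h2 : (inner ℝ (hM.eigenvectorBasis i) (hM.eigenvectorBasis i) : ℝ) = 1 := by
      rw [real_inner_self_eq_norm_mul_norm, h]; norm_num
    rw [← h2, PiLp.inner_apply]
    simp only [RCLike.inner_apply, starRingEnd_apply, star_trivial]
    rfl
  set v : 𝒮 → ℝ := fun s => ∑ y, u y * B y s with hv_def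
  have hev : ev = ∑ s, v s * v s := by
    have e1 : ∑ y, u y * ((B * Bᵀ) *ᵥ u) y = ev * ∑ y, u y * u y := by
      rw [hu, Finset.mul_sum]
      exact Finset.sum_congr rfl fun y _ => by
        simp only [Pi.smul_apply, smul_eq_mul]; ring
    have e2 : ∑ y, u y * ((B * Bᵀ) *ᵥ u) y = ∑ s, v s * v s := by
      calc ∑ y, u y * ((B * Bᵀ) *ᵥ u) y
          = ∑ y, u y * (∑ y', (∑ s, B y s * B y' s) * u y') :=
            Finset.sum_congr rfl fun y _ => by rw [mulVec_apply_eq]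
        _ = ∑ s, (∑ y, u y * B y s) * (∑ y, u y * B y s) := sum_exchange B u u
        _ = ∑ s, v s * v s := rfl
    rw [← e2, e1, hnorm, mul_one]
  have hev_nonneg : 0 ≤ ev := hev ▸ Finset.sum_nonneg fun s _ => mul_self_nonneg _
  have hev_pos : 0 < ev := lt_of_le_of_ne hev_nonneg (Ne.symm hne)
  have huzero : ∀ y, margY P y = 0 → u y = 0 := by
    intro y hy
    have h0 : ((B * Bᵀ) *ᵥ u) y = 0 := by
      rw [mulVec_apply_eq]
      refine Finset.sum_eq_zero fun y' _ => ?_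
      have hz : ∀ s, B y s = 0 := fun s => Bmat_zero P hP0 hy s
      simp [hz]
    have h1 : ev * u y = 0 := by
      simpa [h0, Pi.smul_apply, smul_eq_mul] using (congrFun hu y).symm
    exact (mul_eq_zero.mp h1).resolve_left hne
  have hq_u : ∑ y, Real.sqrt (margY P y) * u y = 0 := by
    have e1 : ∑ y, Real.sqrt (margY P y) * ((B * Bᵀ) *ᵥ u) y
        = ev * ∑ y, Real.sqrt (margY P y) * u y := by
      rw [hu, Finset.mul_sum]
      exact Finset.sum_congr rfl fun y _ => by
        simp only [Pi.smul_apply, smul_eq_mul]; ring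
    have e2 : ∑ y, Real.sqrt (margY P y) * ((B * Bᵀ) *ᵥ u) y = 0 := by
      calc ∑ y, Real.sqrt (margY P y) * ((B * Bᵀ) *ᵥ u) y
          = ∑ y, Real.sqrt (margY P y) * (∑ y', (∑ s, B y s * B y' s) * u y') :=
            Finset.sum_congr rfl fun y _ => by rw [mulVec_apply_eq]
        _ = ∑ s, (∑ y, Real.sqrt (margY P y) * B y s) * (∑ y, u y * B y s) :=
            sum_exchange B u (fun y => Real.sqrt (margY P y))
        _ = 0 := Finset.sum_eq_zero fun s _ => by
            rw [col_orth P hP0 hP1 hS s, zero_mul]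
    have h3 : ev * ∑ y, Real.sqrt (margY P y) * u y = 0 := e1 ▸ e2
    exact (mul_eq_zero.mp h3).resolve_left hne
  have hp_v : ∑ s, Real.sqrt (margS P s) * v s = 0 := by
    calc ∑ s, Real.sqrt (margS P s) * v s
        = ∑ s, ∑ y, u y * (Real.sqrt (margS P s) * B y s) := by
          refine Finset.sum_congr rfl fun s _ => ?_
          rw [hv_def, Finset.mul_sum]
          exact Finset.sum_congr rfl fun y _ => by ring
      _ = ∑ y, ∑ s, u y * (Real.sqrt (margS P s) * B y s) := Finset.sum_comm
      _ = ∑ y, u y * ∑ s, Real.sqrt (margS P s) * B y s :=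
          Finset.sum_congr rfl fun y _ => (Finset.mul_sum _ _ _).symm
      _ = 0 := Finset.sum_eq_zero fun y _ => by
          rw [row_orth P hP0 hP1 hS y, mul_zero]
  set c := Real.sqrt ev with hc_def
  have hc_pos : 0 < c := Real.sqrt_pos.mpr hev_pos
  have hc2 : c * c = ev := Real.mul_self_sqrt hev_nonneg
  have A1 : ∑ y, margY P y * (u y / Real.sqrt (margY P y)) = 0 := by
    rw [← hq_u]
    exact Finset.sum_congr rfl fun y _ => aux1 (margY_nonneg P hP0 y)
  have A2 : ∑ s, margS P s * (v s / (Real.sqrt (margS P s) * c)) = 0 := by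
    calc ∑ s, margS P s * (v s / (Real.sqrt (margS P s) * c))
        = ∑ s, Real.sqrt (margS P s) * v s / c :=
          Finset.sum_congr rfl fun s _ => aux3 (hS s) hc_pos.ne'
      _ = (∑ s, Real.sqrt (margS P s) * v s) / c := by rw [Finset.sum_div]
      _ = 0 := by rw [hp_v, zero_div]
  have A3 : ∑ y, margY P y * (u y / Real.sqrt (margY P y)) ^ 2 = 1 := by
    rw [← hnorm]
    exact Finset.sum_congr rfl fun y _ =>
      aux2 (margY_nonneg P hP0 y) (huzero y)
  have A4 : ∑ s, margS P s * (v s / (Real.sqrt (margS P s) * c)) ^ 2 = 1 := by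
    calc ∑ s, margS P s * (v s / (Real.sqrt (margS P s) * c)) ^ 2
        = ∑ s, v s * v s / (c * c) :=
          Finset.sum_congr rfl fun s _ => aux4 (hS s) hc_pos.ne'
      _ = (∑ s, v s * v s) / (c * c) := by rw [Finset.sum_div]
      _ = 1 := by rw [← hev, hc2, div_self hev_pos.ne']
  have A5 : ∑ y, ∑ s, P y s * (u y / Real.sqrt (margY P y))
      * (v s / (Real.sqrt (margS P s) * c)) = c := by
    have point : ∀ y s, P y s * (u y / Real.sqrt (margY P y))
        * (v s / (Real.sqrt (margS P s) * c))
        = B y s * u y * (v s / c)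
          + (Real.sqrt (margY P y) * u y) * (Real.sqrt (margS P s) * (v s / c)) := by
      intro y s
      rcases eq_or_lt_of_le (margY_nonneg P hP0 y) with hq | hq
      · have hu0 : u y = 0 := huzero y hq.symm
        have hP' : P y s = 0 := P_eq_zero P hP0 hq.symm s
        simp [hu0, hP']
      · have h1 : Real.sqrt (margY P y) ≠ 0 := Real.sqrt_ne_zero'.mpr hq
        have h2 : Real.sqrt (margS P s) ≠ 0 := Real.sqrt_ne_zero'.mpr (hS s)
        refine aux5 h1 h2 hc_pos.ne' ?_
        rw [hB_def]
        rw [sqrt_mul_Bmat P hP0 hS y s, Real.mul_self_sqrt hq.le,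
          Real.mul_self_sqrt (hS s).le]
        ring
    calc ∑ y, ∑ s, P y s * (u y / Real.sqrt (margY P y))
          * (v s / (Real.sqrt (margS P s) * c))
        = ∑ y, ∑ s, (B y s * u y * (v s / c)
            + (Real.sqrt (margY P y) * u y) * (Real.sqrt (margS P s) * (v s / c))) :=
          Finset.sum_congr rfl fun y _ => Finset.sum_congr rfl fun s _ => point y s
      _ = (∑ y, ∑ s, B y s * u y * (v s / c))
          + ∑ y, ∑ s, (Real.sqrt (margY P y) * u y)
              * (Real.sqrt (margS P s) * (v s / c)) := by
          rw [← Finset.sum_add_distrib]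
          exact Finset.sum_congr rfl fun y _ => Finset.sum_add_distrib
      _ = (∑ s, v s * v s) / c + (∑ y, Real.sqrt (margY P y) * u y)
            * (∑ s, Real.sqrt (margS P s) * (v s / c)) := by
          congr 1
          · calc ∑ y, ∑ s, B y s * u y * (v s / c)
                = ∑ s, ∑ y, B y s * u y * (v s / c) := Finset.sum_comm
              _ = ∑ s, (∑ y, u y * B y s) * (v s / c) := by
                  refine Finset.sum_congr rfl fun s _ => ?_
                  rw [Finset.sum_mul]
                  exact Finset.sum_congr rfl fun y _ => by ring
              _ = ∑ s, v s * (v s / c) := rfl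
              _ = (∑ s, v s * v s) / c := by
                  rw [Finset.sum_div]
                  exact Finset.sum_congr rfl fun s _ => (mul_div_assoc _ _ _).symm
          · rw [Finset.sum_mul_sum]
      _ = c := by
          rw [hq_u, zero_mul, add_zero, ← hev, ← hc2]
          field_simp
  have hcS : c ∈ corrSet P :=
    ⟨fun y => u y / Real.sqrt (margY P y),
     fun s => v s / (Real.sqrt (margS P s) * c), A1, A2, A3, A4, A5.symm⟩
  have hcle : c ≤ maxCorr P := by
    rw [maxCorr_eq]
    exact le_csSup (corrSet_bddAbove P hP0 hP1) hcS
  have hcle1 : c ≤ 1 := corrSet_le_one P hP0 hP1 hcS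
  calc ev = c * c := hc2.symm
    _ ≤ c * 1 := mul_le_mul_of_nonneg_left hcle1 hc_pos.le
    _ = c := mul_one c
    _ ≤ maxCorr P := hcle

lemma rank_succ_le [DecidableEq 𝒮] (B : Matrix 𝒴 𝒮 ℝ) (w : 𝒮 → ℝ) (hw : w ≠ 0)
    (h : B *ᵥ w = 0) : B.rank + 1 ≤ Fintype.card 𝒮 := by
  have hker : Nontrivial (LinearMap.ker B.mulVecLin) := by
    refine nontrivial_of_ne ⟨w, ?_⟩ 0 ?_
    · simpa [Matrix.mulVecLin] using h
    · simp [Ne, Submodule.mk_eq_zero, hw]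
  have h2 := LinearMap.finrank_range_add_finrank_ker B.mulVecLin
  have h3 : 1 ≤ Module.finrank ℝ (LinearMap.ker B.mulVecLin) :=
    Submodule.one_le_finrank_iff.mpr (Submodule.nontrivial_iff_ne_bot.mp hker)
  have h4 : Module.finrank ℝ (𝒮 → ℝ) = Fintype.card 𝒮 := Module.finrank_pi ℝ
  rw [Matrix.rank]
  omega

end Eigen

end MaxCorrAux

open Matrix in
/-- **Lemma 3.** For every pair of jointly distributed random variables `(Y, S)` on finite
sets with at least two elements each, with `r = min{|𝒮|, |𝒴|} - 1`,
`r ρ_m(Y, S) ≥ h(2 E_{s∼P_S}[TV(P_{Y|S=s}, P_Y)])`. -/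
theorem maxCorr_ge_hfun_expected_tv
    (P : 𝒴 → 𝒮 → ℝ)
    (hP0 : ∀ y s, 0 ≤ P y s)
    (hP1 : ∑ y, ∑ s, P y s = 1)
    (hS : ∀ s, 0 < margS P s)
    (hcard𝒴 : 2 ≤ Fintype.card 𝒴)
    (hcard𝒮 : 2 ≤ Fintype.card 𝒮) :
    ((min (Fintype.card 𝒮) (Fintype.card 𝒴) : ℝ) - 1) * maxCorr P
      ≥ hfun (2 * ∑ s, margS P s * TV (condYS P s) (margY P)) := by
  classical
  set B := MaxCorrAux.Bmat P with hB
  have hM : (B * Bᵀ).IsHermitian := by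
    have := Matrix.isHermitian_mul_conjTranspose_self B
    simpa using this
  set T := ∑ y, ∑ s, |P y s - margY P y * margS P s| with hT
  -- Step 1 : the argument of `hfun` equals `T`.
  have h15 : 2 * ∑ s, margS P s * TV (condYS P s) (margY P) = T := by
    calc 2 * ∑ s, margS P s * TV (condYS P s) (margY P)
        = ∑ s, ∑ y, margS P s * |condYS P s y - margY P y| := by
          rw [Finset.mul_sum]
          refine Finset.sum_congr rfl fun s _ => ?_
          rw [TV, ← Finset.mul_sum]
          ring
      _ = ∑ s, ∑ y, |P y s - margY P y * margS P s| := by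
          refine Finset.sum_congr rfl fun s _ => Finset.sum_congr rfl fun y _ => ?_
          have hp := hS s
          have e : margS P s * |condYS P s y - margY P y|
              = |margS P s * (condYS P s y - margY P y)| := by
            rw [abs_mul, abs_of_pos hp]
          rw [e]
          congr 1
          rw [condYS]
          field_simp
      _ = T := Finset.sum_comm.trans hT.symm
  rw [h15, ge_iff_le]
  -- Step 2 : `hfun T ≤ T ^ 2`.
  have h16 : hfun T ≤ T ^ 2 := by
    simp only [hfun]
    split_ifs with h
    · exact le_refl _
    · nlinarith [sq_nonneg (T - 1)]
  -- Step 3 : `T ^ 2 ≤ ∑ B ^ 2` (Cauchy–Schwarz).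
  have h14 : T ^ 2 ≤ ∑ y, ∑ s, B y s ^ 2 := by
    have habs : ∀ y s, |P y s - margY P y * margS P s|
        = (Real.sqrt (margY P y) * Real.sqrt (margS P s)) * |B y s| := by
      intro y s
      rw [← MaxCorrAux.sqrt_mul_Bmat P hP0 hS y s, abs_mul]
      congr 1
      exact abs_of_nonneg (by positivity)
    have hT2 : T = ∑ x ∈ Finset.univ ×ˢ Finset.univ,
        (Real.sqrt (margY P x.1) * Real.sqrt (margS P x.2)) * |B x.1 x.2| := by
      rw [hT, Finset.sum_product]
      exact Finset.sum_congr rfl fun y _ => Finset.sum_congr rfl fun s _ => habs y s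
    have hcs := Finset.sum_mul_sq_le_sq_mul_sq (Finset.univ ×ˢ Finset.univ)
      (fun x : 𝒴 × 𝒮 => Real.sqrt (margY P x.1) * Real.sqrt (margS P x.2))
      (fun x : 𝒴 × 𝒮 => |B x.1 x.2|)
    have e1 : ∑ x ∈ Finset.univ ×ˢ Finset.univ,
        (Real.sqrt (margY P x.1) * Real.sqrt (margS P x.2)) ^ 2 = 1 := by
      rw [Finset.sum_product]
      calc ∑ y, ∑ s, (Real.sqrt (margY P y) * Real.sqrt (margS P s)) ^ 2
          = ∑ y, ∑ s, margY P y * margS P s := by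
            refine Finset.sum_congr rfl fun y _ => Finset.sum_congr rfl fun s _ => ?_
            rw [mul_pow, Real.sq_sqrt (MaxCorrAux.margY_nonneg P hP0 y),
              Real.sq_sqrt (hS s).le]
        _ = (∑ y, margY P y) * (∑ s, margS P s) := (Finset.sum_mul_sum _ _ _ _).symm
        _ = 1 := by rw [MaxCorrAux.sum_margY P hP1, MaxCorrAux.sum_margS P hP1, mul_one]
    have e2 : ∑ x ∈ Finset.univ ×ˢ Finset.univ, |B x.1 x.2| ^ 2
        = ∑ y, ∑ s, B y s ^ 2 := by
      rw [Finset.sum_product]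
      exact Finset.sum_congr rfl fun y _ => Finset.sum_congr rfl fun s _ => sq_abs _
    rw [← hT2, e1, e2, one_mul] at hcs
    exact hcs
  -- Step 4 : `∑ B ^ 2 = trace (B * Bᵀ)`.
  have htr : ∑ y, ∑ s, B y s ^ 2 = (B * Bᵀ).trace := by
    rw [Matrix.trace]
    refine (Finset.sum_congr rfl fun y _ => ?_).symm
    rw [Matrix.diag_apply, Matrix.mul_apply]
    exact Finset.sum_congr rfl fun s _ => by rw [Matrix.transpose_apply, sq]
  -- Step 5 : trace equals the sum of eigenvalues.
  have heig : (B * Bᵀ).trace = ∑ i, hM.eigenvalues i := by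
    conv_lhs => rw [hM.spectral_theorem, Unitary.conjStarAlgAut_apply]
    rw [Matrix.trace_mul_comm, ← Matrix.mul_assoc]
    rw [(Matrix.mem_unitaryGroup_iff').mp (hM.eigenvectorUnitary).2]
    simp [Matrix.trace_diagonal]
  -- Step 6 : only nonzero eigenvalues contribute, each at most `maxCorr P`.
  set t : Finset 𝒴 := Finset.univ.filter (fun i => hM.eigenvalues i ≠ 0) with ht
  have hfil : ∑ i, hM.eigenvalues i = ∑ i ∈ t, hM.eigenvalues i :=
    (Finset.sum_filter_ne_zero _).symm
  have hsum : ∑ i ∈ t, hM.eigenvalues i ≤ (t.card : ℝ) * maxCorr P := by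
    calc ∑ i ∈ t, hM.eigenvalues i ≤ t.card • maxCorr P :=
          Finset.sum_le_card_nsmul t _ _ fun i hi =>
            MaxCorrAux.eig_le_maxCorr P hP0 hP1 hS hM i (Finset.mem_filter.mp hi).2
      _ = (t.card : ℝ) * maxCorr P := nsmul_eq_mul _ _
  -- Step 7 : `t.card = rank (B * Bᵀ) ≤ min |𝒮| |𝒴| - 1`.
  have hcardt : t.card = (B * Bᵀ).rank := by
    rw [hM.rank_eq_card_non_zero_eigs, Fintype.card_subtype]
  have hwS : B *ᵥ (fun s => Real.sqrt (margS P s)) = 0 := by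
    funext y
    simp only [Matrix.mulVec, dotProduct, Pi.zero_apply]
    rw [← MaxCorrAux.row_orth P hP0 hP1 hS y]
    exact Finset.sum_congr rfl fun s _ => mul_comm _ _
  have hwY : Bᵀ *ᵥ (fun y => Real.sqrt (margY P y)) = 0 := by
    funext s
    simp only [Matrix.mulVec, dotProduct, Pi.zero_apply, Matrix.transpose_apply]
    rw [← MaxCorrAux.col_orth P hP0 hP1 hS s]
    exact Finset.sum_congr rfl fun y _ => mul_comm _ _
  have hS_ne : (fun s => Real.sqrt (margS P s)) ≠ (0 : 𝒮 → ℝ) := by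
    have : Nonempty 𝒮 := Fintype.card_pos_iff.mp (by omega)
    obtain ⟨s0⟩ := this
    intro h
    have := congrFun h s0
    simp only [Pi.zero_apply] at this
    exact (Real.sqrt_ne_zero'.mpr (hS s0)) this
  have hY_ne : (fun y => Real.sqrt (margY P y)) ≠ (0 : 𝒴 → ℝ) := by
    intro h
    have hzero : ∀ y, margY P y = 0 := by
      intro y
      have := congrFun h y
      simp only [Pi.zero_apply] at this
      exact le_antisymm (Real.sqrt_eq_zero'.mp this) (MaxCorrAux.margY_nonneg P hP0 y)
    have : (1 : ℝ) = 0 := by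
      rw [← MaxCorrAux.sum_margY P hP1]
      exact Finset.sum_eq_zero fun y _ => hzero y
    norm_num at this
  have hrank1 : (B * Bᵀ).rank + 1 ≤ Fintype.card 𝒮 := by
    have r1 : (B * Bᵀ).rank ≤ B.rank := Matrix.rank_mul_le_left B Bᵀ
    have r2 : B.rank + 1 ≤ Fintype.card 𝒮 := MaxCorrAux.rank_succ_le B _ hS_ne hwS
    omega
  have hrank2 : (B * Bᵀ).rank + 1 ≤ Fintype.card 𝒴 := by
    have r1 : (B * Bᵀ).rank ≤ Bᵀ.rank := Matrix.rank_mul_le_right B Bᵀ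
    have r2 : Bᵀ.rank + 1 ≤ Fintype.card 𝒴 := MaxCorrAux.rank_succ_le Bᵀ _ hY_ne hwY
    omega
  have hcardR : (t.card : ℝ) ≤ (min (Fintype.card 𝒮) (Fintype.card 𝒴) : ℝ) - 1 := by
    have hnat : t.card + 1 ≤ min (Fintype.card 𝒮) (Fintype.card 𝒴) := by
      rw [hcardt]
      omega
    have hcast : ((t.card + 1 : ℕ) : ℝ)
        ≤ ((min (Fintype.card 𝒮) (Fintype.card 𝒴) : ℕ) : ℝ) := Nat.cast_le.mpr hnat
    push_cast at hcast ⊢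
    linarith
  calc hfun T ≤ T ^ 2 := h16
    _ ≤ ∑ y, ∑ s, B y s ^ 2 := h14
    _ = (B * Bᵀ).trace := htr
    _ = ∑ i, hM.eigenvalues i := heig
    _ = ∑ i ∈ t, hM.eigenvalues i := hfil
    _ ≤ (t.card : ℝ) * maxCorr P := hsum
    _ ≤ ((min (Fintype.card 𝒮) (Fintype.card 𝒴) : ℝ) - 1) * maxCorr P :=
        mul_le_mul_of_nonneg_right hcardR (MaxCorrAux.maxCorr_nonneg P hP0 hP1)
end
end

section
/- Let P_{Y,S} be a joint distribution on finite sets 𝒴 × 𝒮 with P_S(s) > 0 for all s, let s_max ∈ 𝒮 satisfy P_S(s_max) = 1/2 + δ for some δ > 0, and let Q be any probability distribution on 𝒴. If E_{s∼P_S}[ TV(P_{Y|S=s}, Q) ] − E_{s∼P_S}[ TV(P_{Y|S=s}, P_{Y|S=s_max}) ] ≤ ε/2, then TV(P_{Y|S=s_max}, Q) ≤ ε/(4δ). -/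
open Finset

noncomputable section

variable {𝒴 𝒮 : Type*} [Fintype 𝒴] [Fintype 𝒮]

lemma TV_nonneg (p q : 𝒴 → ℝ) : 0 ≤ TV p q := by
  unfold TV
  positivity

lemma TV_self (p : 𝒴 → ℝ) : TV p p = 0 := by
  simp [TV]

lemma TV_triangle (p q r : 𝒴 → ℝ) : TV p r ≤ TV p q + TV q r := by
  unfold TV
  rw [← mul_add, ← Finset.sum_add_distrib]
  gcongr with y hy
  exact abs_sub_le _ _ _

/-- If `P_S(s_max) = 1/2 + δ` with `δ > 0` and
`E_{s∼P_S}[TV(P_{Y|S=s}, Q)] - E_{s∼P_S}[TV(P_{Y|S=s}, P_{Y|S=s_max})] ≤ ε/2`, then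
`TV(P_{Y|S=s_max}, Q) ≤ ε/(4δ)`. -/
theorem tv_to_majority_conditional
    (P : 𝒴 → 𝒮 → ℝ)
    (hP0 : ∀ y s, 0 ≤ P y s)
    (hP1 : ∑ y, ∑ s, P y s = 1)
    (hS : ∀ s, 0 < margS P s)
    (smax : 𝒮) (δ : ℝ) (hδ : 0 < δ) (hsmax : margS P smax = 1 / 2 + δ)
    (Q : 𝒴 → ℝ) (hQ0 : ∀ y, 0 ≤ Q y) (hQ1 : ∑ y, Q y = 1)
    (ε : ℝ)
    (hgap : (∑ s, margS P s * TV (condYS P s) Q)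
        - (∑ s, margS P s * TV (condYS P s) (condYS P smax)) ≤ ε / 2) :
    TV (condYS P smax) Q ≤ ε / (4 * δ) := by
  classical
  set T := TV (condYS P smax) Q with hT
  have hT0 : 0 ≤ T := TV_nonneg _ _
  have hsum1 : ∑ s, margS P s = 1 := by
    rw [← hP1, Finset.sum_comm]; rfl
  have herase : ∑ s ∈ Finset.univ.erase smax, margS P s = 1 / 2 - δ := by
    have := Finset.add_sum_erase Finset.univ (margS P) (Finset.mem_univ smax)
    rw [hsum1, hsmax] at this
    linarith
  -- rewrite gap as single sum
  have hgap' : ∑ s, margS P s * (TV (condYS P s) Q - TV (condYS P s) (condYS P smax))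
      ≤ ε / 2 := by
    calc ∑ s, margS P s * (TV (condYS P s) Q - TV (condYS P s) (condYS P smax))
        = (∑ s, margS P s * TV (condYS P s) Q)
          - (∑ s, margS P s * TV (condYS P s) (condYS P smax)) := by
          rw [← Finset.sum_sub_distrib]; congr 1; ext s; ring
      _ ≤ ε / 2 := hgap
  have hkey : 2 * δ * T ≤ ε / 2 := by
    refine le_trans ?_ hgap'
    rw [← Finset.add_sum_erase Finset.univ _ (Finset.mem_univ smax)]
    have h1 : margS P smax * (TV (condYS P smax) Q - TV (condYS P smax) (condYS P smax))
        = (1/2 + δ) * T := by rw [TV_self, hsmax]; ring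
    have h2 : ∑ s ∈ Finset.univ.erase smax,
        margS P s * (TV (condYS P s) Q - TV (condYS P s) (condYS P smax))
        ≥ ∑ s ∈ Finset.univ.erase smax, margS P s * (-T) := by
      apply Finset.sum_le_sum
      intro s _
      apply mul_le_mul_of_nonneg_left _ (hS s).le
      have htri := TV_triangle (condYS P s) Q (condYS P smax)
      have hsymm : TV Q (condYS P smax) = T := by
        rw [hT]; unfold TV; rw [Finset.sum_congr rfl fun y _ => abs_sub_comm (Q y) _]
      linarith
    have h3 : ∑ s ∈ Finset.univ.erase smax, margS P s * (-T) = (1/2 - δ) * (-T) := by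
      rw [← Finset.sum_mul, herase]
    rw [h1]
    nlinarith [h2, h3]
  have h4δ : 0 < 4 * δ := by linarith
  rw [le_div_iff₀ h4δ]
  nlinarith
end
end
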